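/- Let p ≠ 2 be prime and a ∈ ℤ_p^× not a root of unity, written a = ζ a₁ with ζ a primitive k-th root of unity (p ∤ k) and a₁ ∈ 1 + pℤ_p. Let n = ord_p(a₁ − 1). Then the closure of {a^j : j ∈ ℕ} in ℤ_p^× equals (1 + p^n ℤ_p) · ⟨ζ⟩, and consequently the number of distinct orbit closures of the multiplication map L_a(x) = ax on the unit circle ℤ_p^× is N(a) = (p−1) p^{n−1} / k. -/

import Mathlib

section PadicAux

variable {p : ℕ} [hp : Fact p.Prime]


open Finset in
/-- In any commutative ring, `x^2 ∣ (1+x)^r - 1 - r*x`. -/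
theorem aux_sq_dvd {R : Type*} [CommRing R] (x : R) : ∀ r : ℕ, x ^ 2 ∣ (1 + x) ^ r - 1 - r * x := by
  intro r
  induction r with
  | zero => simp
  | succ r ih =>
    have : (1 + x) ^ (r + 1) - 1 - (r + 1 : ℕ) * x
        = (1 + x) * ((1 + x) ^ r - 1 - r * x) + r * x ^ 2 := by push_cast; ring
    rw [this]
    exact dvd_add (Dvd.dvd.mul_left ih _) (Dvd.dvd.mul_left (dvd_refl _) _)

open Finset in
/-- For p prime, `p*x^2 ∣ (1+x)^p - 1 - p*x - x^p`. -/
theorem aux_p_dvd {R : Type*} [CommRing R] (p : ℕ) (hpprime : p.Prime) (x : R) :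
    (p : R) * x ^ 2 ∣ (1 + x) ^ p - 1 - p * x - x ^ p := by
  have h2 : 2 ≤ p := hpprime.two_le
  have expand : (x + 1) ^ p = ∑ i ∈ range (p + 1), x ^ i * (p.choose i : R) := by
    rw [add_pow]; simp
  have split : ∑ i ∈ range (p + 1), x ^ i * (p.choose i : R)
      = 1 + p * x + (∑ i ∈ Ico 2 p, x ^ i * (p.choose i : R)) + x ^ p := by
    rw [range_eq_Ico, ← Finset.sum_Ico_consecutive _ (Nat.zero_le 2) (le_trans h2 (Nat.le_succ p)),
      ← Finset.sum_Ico_consecutive _ h2 (Nat.le_succ p)]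
    have h1 : ∑ i ∈ Ico 0 2, x ^ i * (p.choose i : R) = 1 + p * x := by
      rw [show Ico 0 2 = {0, 1} from rfl]
      simp [mul_comm]
    have h3 : ∑ i ∈ Ico p (p+1), x ^ i * (p.choose i : R) = x ^ p := by
      simp
    rw [h1, h3]; ring
  have hdvd : (p : R) * x ^ 2 ∣ ∑ i ∈ Ico 2 p, x ^ i * (p.choose i : R) := by
    refine Finset.dvd_sum fun i hi => ?_
    obtain ⟨hi2, hip⟩ := Finset.mem_Ico.mp hi
    have hpc : (p : ℕ) ∣ p.choose i := hpprime.dvd_choose_self (by omega) hip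
    obtain ⟨c, hc⟩ := hpc
    obtain ⟨m, hm⟩ : ∃ m, i = 2 + m := ⟨i - 2, by omega⟩
    rw [hc, hm]
    push_cast
    rw [pow_add]
    ring_nf
    exact ⟨x ^ m * c, by ring⟩
  have : (1 + x) ^ p - 1 - p * x - x ^ p = ∑ i ∈ Ico 2 p, x ^ i * (p.choose i : R) := by
    rw [add_comm (1:R) x, expand, split]; ring
  rw [this]; exact hdvd
theorem aux_dvd_iff_norm (m : ℕ) (x : ℤ_[p]) :
    (p : ℤ_[p]) ^ m ∣ x ↔ ‖x‖ ≤ (p : ℝ) ^ (-(m : ℤ)) := by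
  rw [PadicInt.norm_le_pow_iff_mem_span_pow, Ideal.mem_span_singleton]

theorem aux_norm_one_add {c : ℤ_[p]} {y : ℤ_[p]} (hc : ‖c‖ = 1) (hy : ‖y‖ < 1) :
    ‖c + y‖ = 1 := by
  rcases eq_or_ne y 0 with rfl | hy0
  · simpa using hc
  · rw [PadicInt.norm_add_eq_max_of_ne (by rw [hc]; exact ne_of_gt hy), hc]
    exact max_eq_left (le_of_lt (hy.trans_eq hc.symm |>.trans_eq hc))

/-- key step: `(1 + p^s c)^p = 1 + p^(s+1) * (c + p*d)` for `p` odd, `s ≥ 1`. -/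
theorem aux_pow_p (hp2 : p ≠ 2) {s : ℕ} (hs : 1 ≤ s) (c : ℤ_[p]) :
    ∃ d : ℤ_[p], (1 + (p:ℤ_[p]) ^ s * c) ^ p = 1 + (p:ℤ_[p]) ^ (s+1) * (c + p * d) := by
  have hp3 : 3 ≤ p := by
    have := hp.out.two_le
    rcases Nat.lt_or_ge p 3 with h | h
    · interval_cases p <;> simp_all
    · exact h
  set x : ℤ_[p] := (p:ℤ_[p]) ^ s * c with hx
  obtain ⟨e, he⟩ := aux_p_dvd p hp.out x
  -- (1+x)^p = 1 + p*x + x^p + p*x^2*e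
  have key : (1 + x) ^ p = 1 + (p:ℤ_[p]) * x + x ^ p + (p:ℤ_[p]) * x ^ 2 * e := by
    linear_combination he
  have hxp : x ^ p = (p:ℤ_[p]) ^ (s+2) * ((p:ℤ_[p]) ^ (s*p - s - 2) * c ^ p) := by
    rw [hx, mul_pow, ← pow_mul, ← mul_assoc, ← pow_add]
    congr 2
    have : s + 2 ≤ s * p := by nlinarith
    omega
  have hx2 : (p:ℤ_[p]) * x ^ 2 * e = (p:ℤ_[p]) ^ (s+2) * ((p:ℤ_[p]) ^ (2*s - s - 1) * c ^ 2 * e) := by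
    rw [hx, mul_pow, ← pow_mul]
    rw [show (p:ℤ_[p]) ^ (s+2) * ((p:ℤ_[p]) ^ (2*s - s - 1) * c ^ 2 * e)
        = (p:ℤ_[p]) ^ ((s+2) + (2*s - s - 1)) * c ^ 2 * e by rw [pow_add]; ring]
    have : (s+2) + (2*s-s-1) = 1 + s*2 := by omega
    rw [this, pow_add]; ring
  refine ⟨(p:ℤ_[p]) ^ (s*p - s - 2) * c ^ p + (p:ℤ_[p]) ^ (2*s - s - 1) * c ^ 2 * e, ?_⟩
  rw [key, hxp, hx2, hx]
  rw [show s + 2 = (s + 1) + 1 by ring]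
  ring
theorem aux_toZModPow_eq_iff (m : ℕ) (x y : ℤ_[p]) :
    PadicInt.toZModPow m x = PadicInt.toZModPow m y ↔ (p : ℤ_[p]) ^ m ∣ x - y := by
  rw [← sub_eq_zero, ← map_sub, ← RingHom.mem_ker, PadicInt.ker_toZModPow,
    Ideal.mem_span_singleton]

namespace PadicGroupAux
theorem norm_pow_aux {b : ℤ_[p]} (hb : ‖b‖ = 1) {j : ℕ} : ‖b ^ j‖ = 1 := by
  induction j with
  | zero => simp
  | succ j ih => rw [pow_succ, norm_mul, ih, hb, one_mul]
end PadicGroupAux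

/-- iterated p-th powers -/
theorem aux_pow_pow (hp2 : p ≠ 2) {n : ℕ} (hn : 1 ≤ n) {b c₀ : ℤ_[p]}
    (hb : b = 1 + (p:ℤ_[p]) ^ n * c₀) (hc₀ : ‖c₀‖ = 1) (i : ℕ) :
    ∃ c : ℤ_[p], ‖c‖ = 1 ∧ b ^ (p ^ i) = 1 + (p:ℤ_[p]) ^ (n + i) * c := by
  induction i with
  | zero => exact ⟨c₀, hc₀, by simpa using hb⟩
  | succ i ih =>
    obtain ⟨c, hc, hbc⟩ := ih
    obtain ⟨d, hd⟩ := aux_pow_p hp2 (le_trans hn (Nat.le_add_right n i)) c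
    refine ⟨c + p * d, ?_, ?_⟩
    · refine aux_norm_one_add hc ?_
      calc ‖(p:ℤ_[p]) * d‖ ≤ ‖(p:ℤ_[p])‖ * 1 := by
            rw [norm_mul]
            exact mul_le_mul_of_nonneg_left (PadicInt.norm_le_one d) (norm_nonneg _)
        _ < 1 := by rw [mul_one, PadicInt.norm_p]
                    exact inv_lt_one_of_one_lt₀ (by exact_mod_cast hp.out.one_lt)
    · rw [pow_succ, pow_mul, hbc, hd, ← add_assoc]

/-- density step: for any target `x ≡ 1 mod p^n` and any precision `m`, some power of `b`
is within `p^(-m)`. -/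
theorem aux_dense (hp2 : p ≠ 2) {n : ℕ} (hn : 1 ≤ n) {b c₀ : ℤ_[p]}
    (hb : b = 1 + (p:ℤ_[p]) ^ n * c₀) (hc₀ : ‖c₀‖ = 1)
    (x : ℤ_[p]) (hx : (p:ℤ_[p]) ^ n ∣ x - 1) :
    ∀ m, n ≤ m → ∃ j : ℕ, (p:ℤ_[p]) ^ m ∣ b ^ j - x := by
  have hbu : ‖b‖ = 1 := by
    rw [hb]
    refine aux_norm_one_add (norm_one) ?_
    calc ‖(p:ℤ_[p])^n * c₀‖ ≤ ‖(p:ℤ_[p])^n‖ * 1 := by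
          rw [norm_mul]
          exact mul_le_mul_of_nonneg_left (PadicInt.norm_le_one _) (norm_nonneg _)
      _ < 1 := by
          rw [mul_one, PadicInt.norm_p_pow]
          refine zpow_lt_one_of_neg₀ (by exact_mod_cast hp.out.one_lt) (by simp; omega)
  intro m hm
  induction m with
  | zero => omega
  | succ m ihm =>
    rcases Nat.lt_or_ge m n with hmn | hmn
    · -- base case: m + 1 = n
      have : m + 1 = n := by omega
      exact ⟨0, by rw [this, pow_zero]; simpa using (dvd_neg.mpr hx)⟩
    · obtain ⟨j, hj⟩ := ihm hmn
      obtain ⟨w, hw⟩ := hj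
      -- b ^ (p^(m-n)) = 1 + p^m c
      obtain ⟨c, hc, hbc⟩ := aux_pow_pow hp2 hn hb hc₀ (m - n)
      rw [show n + (m - n) = m by omega] at hbc
      -- choose r with p ∣ w + r * (b^j * c)
      set v : ℤ_[p] := b ^ j * c with hv
      have hvu : IsUnit v := by
        rw [PadicInt.isUnit_iff, hv, norm_mul, PadicGroupAux.norm_pow_aux hbu, hc, one_mul]
      haveI : NeZero (p ^ 1) := ⟨pow_ne_zero 1 hp.out.ne_zero⟩
      set vz := (PadicInt.toZModPow (p := p) 1) v with hvz
      have hvzu : IsUnit vz := hvu.map _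
      set r : ℕ := ((- (PadicInt.toZModPow (p := p) 1 w)) * ((hvzu.unit⁻¹ : (ZMod (p^1))ˣ) : ZMod (p^1))).val with hr
      have hrdvd : (p:ℤ_[p]) ^ 1 ∣ w + (r : ℤ_[p]) * v := by
        rw [← sub_zero (w + (r:ℤ_[p]) * v), ← aux_toZModPow_eq_iff]
        rw [map_add, map_mul, map_natCast, map_zero, hr, ZMod.natCast_val, ZMod.cast_id]
        rw [mul_assoc, ← hvz]
        rw [IsUnit.val_inv_mul hvzu, mul_one, add_neg_cancel]
      refine ⟨j + p ^ (m - n) * r, ?_⟩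
      -- b^(j + p^(m-n) r) - x = (b^j - x) + b^j * ((1 + p^m c)^r - 1)
      obtain ⟨t, ht⟩ := aux_sq_dvd ((p:ℤ_[p]) ^ m * c) r
      have expand : b ^ (j + p ^ (m - n) * r) - x
          = (p:ℤ_[p]) ^ m * (w + (r:ℤ_[p]) * v) + (p:ℤ_[p])^m*(p:ℤ_[p])^m * (c^2 * t * b ^ j) := by
        have h1 : b ^ (j + p ^ (m - n) * r) = b ^ j * ((1 + (p:ℤ_[p])^m * c) ^ r) := by
          rw [pow_add, pow_mul, hbc]
        have h2 : (1 + (p:ℤ_[p])^m * c) ^ r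
            = 1 + (r:ℤ_[p]) * ((p:ℤ_[p])^m * c) + ((p:ℤ_[p])^m*c)^2 * t := by
          linear_combination ht
        rw [h1, h2, hv]
        have hwx : x = b ^ j - (p:ℤ_[p]) ^ m * w := by rw [← hw]; ring
        rw [hwx]; ring
      rw [expand]
      refine dvd_add ?_ ?_
      · rw [pow_succ]
        exact mul_dvd_mul (dvd_refl _) (by simpa using hrdvd)
      · rw [← pow_add]
        exact dvd_mul_of_dvd_left (pow_dvd_pow _ (show m+1 ≤ m+m by omega)) _
theorem aux_norm_pow (z : ℤ_[p]) (m : ℕ) : ‖z ^ m‖ = ‖z‖ ^ m := by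
  induction m with
  | zero => simp
  | succ m ih => rw [pow_succ, pow_succ, norm_mul, ih]

theorem aux_dvd_pow_sub_one {m : ℕ} {z : ℤ_[p]} (h : (p:ℤ_[p]) ^ m ∣ z - 1) (j : ℕ) :
    (p:ℤ_[p]) ^ m ∣ z ^ j - 1 := by
  obtain ⟨e, he⟩ := h
  obtain ⟨t, ht⟩ := aux_sq_dvd ((p:ℤ_[p]) ^ m * e) j
  have hz : z = 1 + (p:ℤ_[p]) ^ m * e := by linear_combination he
  have : z ^ j - 1 = (p:ℤ_[p]) ^ m * ((j:ℤ_[p]) * e) + ((p:ℤ_[p])^m*e)^2 * t := by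
    rw [hz]; linear_combination ht
  rw [this]
  refine dvd_add ⟨(j:ℤ_[p]) * e, rfl⟩ ?_
  rw [mul_pow, ← pow_mul]
  exact dvd_mul_of_dvd_left (dvd_mul_of_dvd_left (pow_dvd_pow _ (by omega)) _) _

theorem aux_norm_nat_one {k : ℕ} (hpk : ¬ p ∣ k) : ‖(k : ℤ_[p])‖ = 1 := by
  rcases lt_or_eq_of_le (PadicInt.norm_le_one (k : ℤ_[p])) with h | h
  · exfalso
    have h2 : ‖((k : ℤ) : ℤ_[p])‖ < 1 := by exact_mod_cast h
    rw [PadicInt.norm_int_lt_one_iff_dvd] at h2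
    exact hpk (by exact_mod_cast h2)
  · exact h

end PadicAux

/-- Part 1: the closure of the powers of `a`. -/
theorem part1 (p : ℕ) [Fact p.Prime] (hp2 : p ≠ 2)
    (a ζ a₁ : ℤ_[p])
    (k : ℕ) (hζ : IsPrimitiveRoot ζ k) (hpk : ¬ p ∣ k)
    (hfact : a = ζ * a₁) (ha₁ : ‖a₁ - 1‖ < 1)
    (n : ℕ) (hn : 0 < n) (hval : ‖a₁ - 1‖ = (p : ℝ) ^ (-(n : ℤ))) :
    closure {x : ℤ_[p] | ∃ j : ℕ, x = a ^ j} =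
      {x : ℤ_[p] | ∃ (u : ℤ_[p]) (j : ℕ), x = (1 + (p : ℤ_[p]) ^ n * u) * ζ ^ j} := by
  have hk : 0 < k := by
    rcases Nat.eq_zero_or_pos k with rfl | h
    · exact absurd (dvd_zero p) hpk
    · exact h
  have hζ1 : ζ ^ k = 1 := hζ.pow_eq_one
  have hζn : ‖ζ‖ = 1 := by
    have h1 : ‖ζ‖ ^ k = 1 := by rw [← aux_norm_pow, hζ1, norm_one]
    rcases lt_trichotomy ‖ζ‖ 1 with h | h | h
    · exfalso
      have := pow_lt_one₀ (norm_nonneg ζ) h (Nat.pos_iff_ne_zero.mp hk)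
      rw [h1] at this; exact lt_irrefl _ this
    · exact h
    · exfalso
      have := one_lt_pow₀ h (by omega : k ≠ 0)
      rw [h1] at this; exact lt_irrefl _ this
  have ha₁n : ‖a₁‖ = 1 := by
    have : a₁ = 1 + (a₁ - 1) := by ring
    rw [this]; exact aux_norm_one_add norm_one ha₁
  -- a₁ = 1 + p^n e with e a unit
  obtain ⟨e, he⟩ : (p:ℤ_[p]) ^ n ∣ a₁ - 1 := (aux_dvd_iff_norm n _).mpr (le_of_eq hval)
  have hen : ‖e‖ = 1 := by
    have h1 : ‖a₁ - 1‖ = ‖(p:ℤ_[p])^n‖ * ‖e‖ := by rw [he, norm_mul]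
    rw [hval, PadicInt.norm_p_pow] at h1
    have hne : ((p:ℝ) ^ (-(n:ℤ))) ≠ 0 :=
      zpow_ne_zero _ (by exact_mod_cast (Fact.out : p.Prime).ne_zero)
    have h2 : (p:ℝ)^(-(n:ℤ)) * 1 = (p:ℝ)^(-(n:ℤ)) * ‖e‖ := by rw [mul_one]; exact h1
    exact (mul_left_cancel₀ hne h2).symm
  -- the characterization of membership in C
  have memC : ∀ x : ℤ_[p],
      (∃ (u : ℤ_[p]) (j : ℕ), x = (1 + (p : ℤ_[p]) ^ n * u) * ζ ^ j)
        ↔ ∃ j < k, (p:ℤ_[p]) ^ n ∣ x - ζ ^ j := by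
    intro x
    constructor
    · rintro ⟨u, j, rfl⟩
      refine ⟨j % k, Nat.mod_lt _ hk, ?_⟩
      have hzj : ζ ^ j = ζ ^ (j % k) := by
        conv_lhs => rw [← Nat.mod_add_div j k]
        rw [pow_add, pow_mul, hζ1, one_pow, mul_one]
      rw [hzj]
      exact ⟨u * ζ ^ (j % k), by ring⟩
    · rintro ⟨j, hj, v, hv⟩
      refine ⟨v * ζ ^ ((k-1) * j), j, ?_⟩
      have hkj : (k - 1) * j + j = j * k := by
        have h1 : k - 1 + 1 = k := Nat.succ_pred_eq_of_pos hk
        calc (k-1)*j + j = ((k-1)+1)*j := by ring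
          _ = j * k := by rw [h1, mul_comm]
      have hzz : ζ ^ ((k-1) * j) * ζ ^ j = 1 := by
        rw [← pow_add, hkj, pow_mul', hζ1, one_pow]
      have : x = ζ ^ j + (p:ℤ_[p])^n * v := by linear_combination hv
      rw [this]
      calc ζ ^ j + (p:ℤ_[p])^n * v
          = ζ ^ j + (p:ℤ_[p])^n * v * (ζ ^ ((k-1)*j) * ζ ^ j) := by rw [hzz]; ring
        _ = (1 + (p:ℤ_[p])^n * (v * ζ ^ ((k-1)*j))) * ζ ^ j := by ring
  apply le_antisymm
  · -- closure S ⊆ C : C is closed and contains S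
    apply closure_minimal
    · rintro x ⟨j, rfl⟩
      rw [Set.mem_setOf_eq, hfact, mul_pow]
      obtain ⟨u, hu⟩ := aux_dvd_pow_sub_one ⟨e, he⟩ j
      exact ⟨u, j, by rw [show a₁ ^ j = 1 + (p:ℤ_[p])^n * u by linear_combination hu]; ring⟩
    · -- C is closed: finite union of closed balls
      have hCeq : {x : ℤ_[p] | ∃ (u : ℤ_[p]) (j : ℕ), x = (1 + (p : ℤ_[p]) ^ n * u) * ζ ^ j}
          = ⋃ j ∈ Finset.range k, Metric.closedBall (ζ ^ j) ((p:ℝ) ^ (-(n:ℤ))) := by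
        ext x
        rw [Set.mem_setOf_eq, memC x]
        simp only [Set.mem_iUnion, Finset.mem_range, Metric.mem_closedBall, exists_prop]
        constructor
        · rintro ⟨j, hj, hd⟩
          exact ⟨j, hj, by rw [dist_eq_norm, ← aux_dvd_iff_norm]; exact hd⟩
        · rintro ⟨j, hj, hd⟩
          exact ⟨j, hj, by rw [aux_dvd_iff_norm, ← dist_eq_norm]; exact hd⟩
      rw [hCeq]
      exact Set.Finite.isClosed_biUnion (Finset.finite_toSet _)
        (fun j _ => Metric.isClosed_closedBall)
  · -- C ⊆ closure S
    rintro x ⟨u, j₀, rfl⟩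
    rw [Metric.mem_closure_iff]
    intro ε hε
    -- pick m ≥ n with p^(-m) < ε
    obtain ⟨m₀, hm₀⟩ := exists_pow_lt_of_lt_one hε
      (show (p:ℝ)⁻¹ < 1 by
        rw [inv_lt_one_iff₀]; right; exact_mod_cast (Fact.out : p.Prime).one_lt)
    set m := max m₀ n with hm
    have hpm : (p:ℝ) ^ (-(m:ℤ)) < ε := by
      calc (p:ℝ) ^ (-(m:ℤ)) = ((p:ℝ)⁻¹) ^ m := by
            rw [zpow_neg, ← zpow_natCast, inv_zpow]
        _ ≤ ((p:ℝ)⁻¹) ^ m₀ := by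
            apply pow_le_pow_of_le_one (by positivity)
              (by rw [inv_le_one_iff₀]; right; exact_mod_cast (Fact.out : p.Prime).one_le) (le_max_left _ _)
        _ < ε := hm₀
    -- inverse of a₁
    have hu : IsUnit a₁ := PadicInt.isUnit_iff.mpr ha₁n
    set g : ℤ_[p] := ((hu.unit⁻¹ : ℤ_[p]ˣ) : ℤ_[p]) with hg
    have hga : g * a₁ = 1 := IsUnit.val_inv_mul hu
    -- b = a₁^k has the right valuation
    obtain ⟨t, ht⟩ := aux_sq_dvd ((p:ℤ_[p])^n * e) k
    set c₀ : ℤ_[p] := (k:ℤ_[p]) * e + (p:ℤ_[p])^n * (e^2 * t) with hc₀def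
    have hb : a₁ ^ k = 1 + (p:ℤ_[p])^n * c₀ := by
      have ha₁e : a₁ = 1 + (p:ℤ_[p])^n * e := by linear_combination he
      rw [ha₁e, hc₀def]
      linear_combination ht + ((p:ℤ_[p])^n) * (e:ℤ_[p]) * (0:ℤ_[p])
    have hc₀ : ‖c₀‖ = 1 := by
      rw [hc₀def]
      refine aux_norm_one_add ?_ ?_
      · rw [norm_mul, aux_norm_nat_one hpk, hen, one_mul]
      · calc ‖(p:ℤ_[p])^n * (e^2*t)‖ ≤ ‖(p:ℤ_[p])^n‖ * 1 := by
              rw [norm_mul]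
              exact mul_le_mul_of_nonneg_left (PadicInt.norm_le_one _) (norm_nonneg _)
          _ < 1 := by
              rw [mul_one, PadicInt.norm_p_pow]
              refine zpow_lt_one_of_neg₀ (by exact_mod_cast (Fact.out : p.Prime).one_lt) (by simp; omega)
    -- target
    set t₀ : ℤ_[p] := (1 + (p:ℤ_[p])^n * u) * g ^ j₀ with ht₀
    have hgdvd : (p:ℤ_[p])^n ∣ g - 1 := by
      have : g - 1 = -g * (a₁ - 1) := by linear_combination hga
      rw [this]
      exact Dvd.dvd.mul_left ⟨e, he⟩ _
    have ht₀dvd : (p:ℤ_[p])^n ∣ t₀ - 1 := by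
      obtain ⟨w, hw⟩ := aux_dvd_pow_sub_one hgdvd j₀
      have : t₀ - 1 = (1 + (p:ℤ_[p])^n * u) * (g ^ j₀ - 1) + (p:ℤ_[p])^n * u := by
        rw [ht₀]; ring
      rw [this]
      exact dvd_add (Dvd.dvd.mul_left ⟨w, hw⟩ _) ⟨u, rfl⟩
    obtain ⟨s, hs⟩ := aux_dense hp2 hn hb hc₀ t₀ ht₀dvd m (le_max_right _ _)
    refine ⟨a ^ (j₀ + k * s), ⟨j₀ + k * s, rfl⟩, ?_⟩
    have key : a ^ (j₀ + k * s) - (1 + (p:ℤ_[p])^n * u) * ζ ^ j₀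
        = ζ ^ j₀ * (a₁ ^ j₀ * ((a₁ ^ k) ^ s - t₀)) := by
      have hag : a₁ ^ j₀ * g ^ j₀ = 1 := by
        rw [← mul_pow, mul_comm a₁ g, hga, one_pow]
      have h1 : a ^ (j₀ + k * s) = ζ ^ j₀ * (ζ ^ k) ^ s * (a₁ ^ j₀ * (a₁ ^ k) ^ s) := by
        rw [hfact]; rw [mul_pow, pow_add, pow_add, pow_mul, pow_mul]
      rw [h1, hζ1, one_pow, ht₀]
      linear_combination (ζ^j₀ * (1+(p:ℤ_[p])^n*u)) * hag
    rw [dist_eq_norm, ← neg_sub, norm_neg, key, norm_mul, norm_mul,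
      aux_norm_pow, aux_norm_pow, hζn, ha₁n, one_pow, one_mul, one_mul]
    calc ‖(a₁ ^ k) ^ s - t₀‖ ≤ (p:ℝ) ^ (-(m:ℤ)) := (aux_dvd_iff_norm m _).mp hs
      _ < ε := hpm

section PadicAux2

variable {p : ℕ} [hp : Fact p.Prime]

/-- membership in `C` without the bound on `j` -/
theorem aux_memC {ζ : ℤ_[p]} {k : ℕ} (hk : 0 < k) (hζ1 : ζ ^ k = 1) (n : ℕ) (x : ℤ_[p]) :
    (∃ (u : ℤ_[p]) (j : ℕ), x = (1 + (p : ℤ_[p]) ^ n * u) * ζ ^ j)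
      ↔ ∃ j : ℕ, (p:ℤ_[p]) ^ n ∣ x - ζ ^ j := by
  constructor
  · rintro ⟨u, j, rfl⟩
    exact ⟨j, u * ζ ^ j, by ring⟩
  · rintro ⟨j, v, hv⟩
    refine ⟨v * ζ ^ ((k-1) * j), j, ?_⟩
    have hkj : (k - 1) * j + j = j * k := by
      have h1 : k - 1 + 1 = k := Nat.succ_pred_eq_of_pos hk
      calc (k-1)*j + j = ((k-1)+1)*j := by ring
        _ = j * k := by rw [h1, mul_comm]
    have hzz : ζ ^ ((k-1) * j) * ζ ^ j = 1 := by
      rw [← pow_add, hkj, pow_mul', hζ1, one_pow]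
    have : x = ζ ^ j + (p:ℤ_[p])^n * v := by linear_combination hv
    rw [this]
    calc ζ ^ j + (p:ℤ_[p])^n * v
        = ζ ^ j + (p:ℤ_[p])^n * v * (ζ ^ ((k-1)*j) * ζ ^ j) := by rw [hzz]; ring
      _ = (1 + (p:ℤ_[p])^n * (v * ζ ^ ((k-1)*j))) * ζ ^ j := by ring

/-- a root of unity of order prime to `p` that is `≡ 1 mod p` is `1`. -/
theorem aux_root_eq_one {ω : ℤ_[p]} {k' : ℕ} (hpk' : ¬ p ∣ k') (hω : ω ^ k' = 1)
    (hω1 : ‖ω - 1‖ < 1) : ω = 1 := by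
  by_contra hne
  obtain ⟨t, ht⟩ := aux_sq_dvd (ω - 1) k'
  have h0 : (k' : ℤ_[p]) * (ω - 1) = -((ω - 1)^2 * t) := by
    have : (1 + (ω - 1)) ^ k' = 1 := by rw [show (1:ℤ_[p]) + (ω - 1) = ω by ring, hω]
    rw [this] at ht
    linear_combination -ht
  have hnorm : ‖ω - 1‖ = ‖ω - 1‖^2 * ‖t‖ := by
    calc ‖ω - 1‖ = ‖(k':ℤ_[p])‖ * ‖ω - 1‖ := by rw [aux_norm_nat_one hpk', one_mul]
      _ = ‖(k':ℤ_[p]) * (ω - 1)‖ := (norm_mul _ _).symm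
      _ = ‖-((ω-1)^2 * t)‖ := by rw [h0]
      _ = ‖(ω-1)^2‖ * ‖t‖ := by rw [norm_neg, norm_mul]
      _ = ‖ω-1‖^2 * ‖t‖ := by rw [aux_norm_pow]
  have hpos : (0:ℝ) < ‖ω - 1‖ := norm_pos_iff.mpr (sub_ne_zero.mpr hne)
  have h1 : (1:ℝ) = ‖ω - 1‖ * ‖t‖ := by
    have h2 : ‖ω - 1‖ * 1 = ‖ω - 1‖ * (‖ω - 1‖ * ‖t‖) := by
      rw [mul_one]; nth_rewrite 1 [hnorm]; ring
    exact (mul_left_cancel₀ (ne_of_gt hpos) h2)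
  have : ‖ω - 1‖ * ‖t‖ < 1 :=
    lt_of_le_of_lt (mul_le_of_le_one_right (norm_nonneg _) (PadicInt.norm_le_one t)) hω1
  rw [← h1] at this
  exact lt_irrefl _ this

end PadicAux2

/-- Part 2: counting orbit closures. -/
theorem part2 (p : ℕ) [Fact p.Prime] (hp2 : p ≠ 2)
    (ζ : ℤ_[p]) (k : ℕ) (hζ : IsPrimitiveRoot ζ k) (hpk : ¬ p ∣ k)
    (n : ℕ) (hn : 0 < n) :
    Nat.card {s : Set ℤ_[p] | ∃ x : ℤ_[p], ‖x‖ = 1 ∧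
        s = {y : ℤ_[p] | ∃ z ∈ {x : ℤ_[p] | ∃ (u : ℤ_[p]) (j : ℕ),
              x = (1 + (p : ℤ_[p]) ^ n * u) * ζ ^ j}, y = x * z}} =
      (p - 1) * p ^ (n - 1) / k := by
  have hpp : p.Prime := Fact.out
  have hk : 0 < k := by
    rcases Nat.eq_zero_or_pos k with rfl | h
    · exact absurd (dvd_zero p) hpk
    · exact h
  have hζ1 : ζ ^ k = 1 := hζ.pow_eq_one
  have hζn : ‖ζ‖ = 1 := by
    have h1 : ‖ζ‖ ^ k = 1 := by rw [← aux_norm_pow, hζ1, norm_one]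
    rcases lt_trichotomy ‖ζ‖ 1 with h | h | h
    · exfalso
      have := pow_lt_one₀ (norm_nonneg ζ) h (Nat.pos_iff_ne_zero.mp hk)
      rw [h1] at this; exact lt_irrefl _ this
    · exact h
    · exfalso
      have := one_lt_pow₀ h (by omega : k ≠ 0)
      rw [h1] at this; exact lt_irrefl _ this
  haveI : NeZero (p ^ n) := ⟨pow_ne_zero n hpp.ne_zero⟩
  set π : ℤ_[p] →+* ZMod (p ^ n) := PadicInt.toZModPow n with hπ
  -- p is not a unit mod p^n
  have hpnu : ¬ IsUnit ((p : ℕ) : ZMod (p ^ n)) := by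
    rw [ZMod.isUnit_iff_coprime, Nat.Prime.coprime_iff_not_dvd hpp]
    exact fun h => h (dvd_pow_self p (by omega))
  -- units lift to norm-one elements
  have hlift : ∀ v : (ZMod (p ^ n))ˣ, ∃ x : ℤ_[p], ‖x‖ = 1 ∧ π x = ↑v := by
    intro v
    refine ⟨((v : ZMod (p ^ n)).val : ℤ_[p]), ?_, ?_⟩
    · by_contra hxn
      have hlt : ‖((v : ZMod (p ^ n)).val : ℤ_[p])‖ < 1 :=
        lt_of_le_of_ne (PadicInt.norm_le_one _) hxn
      have : ¬ IsUnit ((v : ZMod (p ^ n)).val : ℤ_[p]) := by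
        rw [PadicInt.isUnit_iff]; exact fun h => (ne_of_lt hlt) h
      obtain ⟨w, hw⟩ : (p : ℤ_[p]) ∣ ((v : ZMod (p ^ n)).val : ℤ_[p]) := by
        rwa [← PadicInt.norm_lt_one_iff_dvd]
      have hv : (v : ZMod (p ^ n)) = ((p:ℕ) : ZMod (p ^ n)) * π w := by
        have : π (((v : ZMod (p ^ n)).val : ℕ) : ℤ_[p]) = (v : ZMod (p ^ n)) := by
          rw [map_natCast, ZMod.natCast_val, ZMod.cast_id]
        rw [← this, hw, map_mul, map_natCast]
      exact hpnu (isUnit_of_mul_isUnit_left (hv ▸ v.isUnit))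
    · rw [map_natCast, ZMod.natCast_val, ZMod.cast_id]
  have hζzu : IsUnit (π ζ) := (PadicInt.isUnit_iff.mpr hζn).map π
  set zu : (ZMod (p ^ n))ˣ := hζzu.unit with hzu
  have hzuv : (zu : ZMod (p ^ n)) = π ζ := IsUnit.unit_spec hζzu
  have hzuk : zu ^ k = 1 := by
    ext
    rw [Units.val_pow_eq_pow_val, hzuv, ← map_pow, hζ1, map_one, Units.val_one]
  -- order of zu is k
  have horder : orderOf zu = k := by
    have hdvd : orderOf zu ∣ k := orderOf_dvd_of_pow_eq_one hzuk
    refine Nat.dvd_antisymm hdvd ?_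
    set d := orderOf zu with hd
    have hdpos : 0 < d := by
      refine orderOf_pos zu
    have hζd : ζ ^ d = 1 := by
      have h1 : π (ζ ^ d) = π 1 := by
        rw [map_pow, map_one, ← hzuv, ← Units.val_pow_eq_pow_val, pow_orderOf_eq_one,
          Units.val_one]
      have h2 : (p:ℤ_[p]) ^ n ∣ ζ ^ d - 1 := (aux_toZModPow_eq_iff n _ _).mp h1
      obtain ⟨k', hk'⟩ := hdvd
      have hpk' : ¬ p ∣ k' := fun h => hpk (hk' ▸ Dvd.dvd.mul_left h d)
      have hωk : (ζ ^ d) ^ k' = 1 := by rw [← pow_mul, ← hk', hζ1]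
      refine aux_root_eq_one hpk' hωk ?_
      calc ‖ζ ^ d - 1‖ ≤ (p:ℝ) ^ (-(n:ℤ)) := (aux_dvd_iff_norm n _).mp h2
        _ < 1 := by
            refine zpow_lt_one_of_neg₀ (by exact_mod_cast hpp.one_lt) (by simp; omega)
    exact hζ.dvd_of_pow_eq_one d hζd
  -- the subgroup and quotient
  set H : Subgroup (ZMod (p ^ n))ˣ := Subgroup.zpowers zu with hH
  have hmemH : ∀ g : (ZMod (p ^ n))ˣ, g ∈ H ↔ ∃ j : ℕ, g = zu ^ j := by
    intro g
    constructor
    · rintro ⟨i, rfl⟩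
      refine ⟨(i % (k:ℤ)).toNat, ?_⟩
      have hmod : (i % (k:ℤ)) + (k:ℤ) * (i / (k:ℤ)) = i := Int.emod_add_mul_ediv i k
      have hnn : 0 ≤ i % (k:ℤ) := Int.emod_nonneg i (by exact_mod_cast hk.ne')
      calc zu ^ i = zu ^ ((i % (k:ℤ)) + (k:ℤ) * (i / (k:ℤ))) := by rw [hmod]
        _ = zu ^ (i % (k:ℤ)) * (zu ^ (k:ℤ)) ^ (i / (k:ℤ)) := by
            rw [zpow_add, zpow_mul]
        _ = zu ^ (i % (k:ℤ)) := by
            rw [zpow_natCast, hzuk, one_zpow, mul_one]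
        _ = zu ^ ((i % (k:ℤ)).toNat) := by
            rw [← zpow_natCast, Int.toNat_of_nonneg hnn]
    · rintro ⟨j, rfl⟩
      exact ⟨(j:ℤ), by simp⟩
  -- the orbit description
  have orb : ∀ x : ℤ_[p], ‖x‖ = 1 →
      {y : ℤ_[p] | ∃ z ∈ {x : ℤ_[p] | ∃ (u : ℤ_[p]) (j : ℕ),
          x = (1 + (p : ℤ_[p]) ^ n * u) * ζ ^ j}, y = x * z}
        = {y : ℤ_[p] | ‖y‖ = 1 ∧ ∃ j : ℕ, π y = π x * (π ζ) ^ j} := by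
    intro x hx
    ext y
    simp only [Set.mem_setOf_eq]
    constructor
    · rintro ⟨z, ⟨u, j, rfl⟩, rfl⟩
      constructor
      · rw [norm_mul, norm_mul, hx, aux_norm_pow, hζn, one_pow, mul_one,
          one_mul]
        refine aux_norm_one_add norm_one ?_
        calc ‖(p:ℤ_[p])^n * u‖ ≤ ‖(p:ℤ_[p])^n‖ * 1 := by
              rw [norm_mul]
              exact mul_le_mul_of_nonneg_left (PadicInt.norm_le_one _) (norm_nonneg _)
          _ < 1 := by
              rw [mul_one, PadicInt.norm_p_pow]
              exact zpow_lt_one_of_neg₀ (by exact_mod_cast hpp.one_lt) (by simp; omega)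
      · refine ⟨j, ?_⟩
        have h1 : π (1 + (p:ℤ_[p])^n * u) = π 1 := by
          rw [aux_toZModPow_eq_iff]
          exact ⟨u, by ring⟩
        rw [map_mul, map_mul, map_pow, h1, map_one, one_mul]
    · rintro ⟨hy, j, hj⟩
      have hxu : IsUnit x := PadicInt.isUnit_iff.mpr hx
      set xi : ℤ_[p] := ((hxu.unit⁻¹ : ℤ_[p]ˣ) : ℤ_[p]) with hxi
      have hxxi : xi * x = 1 := IsUnit.val_inv_mul hxu
      refine ⟨y * xi, ?_, by rw [show x * (y * xi) = y * (xi * x) from by ring, hxxi, mul_one]⟩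
      rw [aux_memC hk hζ1 n]
      refine ⟨j, ?_⟩
      rw [← aux_toZModPow_eq_iff]
      have hπxi : π x * π xi = 1 := by rw [← map_mul, mul_comm x xi, hxxi, map_one]
      calc π (y * xi) = (π x * (π ζ) ^ j) * π xi := by rw [map_mul, hj]
        _ = (π ζ) ^ j * (π x * π xi) := by ring
        _ = π (ζ ^ j) := by rw [hπxi, mul_one, map_pow]
  -- define F
  set F : (ZMod (p ^ n))ˣ → Set ℤ_[p] :=
    fun v => {y : ℤ_[p] | ‖y‖ = 1 ∧ ∃ j : ℕ, π y = ↑v * (π ζ) ^ j} with hF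
  -- F is constant exactly on cosets of H
  have hFstep : ∀ (v : (ZMod (p ^ n))ˣ) (j₀ : ℕ), F v ⊆ F (v * zu ^ j₀) := by
    intro v j₀ y hy
    obtain ⟨hy1, j, hj⟩ := hy
    refine ⟨hy1, j + (k-1) * j₀, ?_⟩
    have h2 : k * j₀ = j₀ + (k-1) * j₀ := by
      cases k with
      | zero => omega
      | succ k => simp only [Nat.succ_sub_one]; ring
    have hkj : j + k * j₀ = j₀ + (j + (k-1) * j₀) := by omega
    rw [hj]
    rw [Units.val_mul, Units.val_pow_eq_pow_val, hzuv]
    calc ↑v * (π ζ) ^ j = ↑v * ((π ζ) ^ j * (π (ζ ^ k)) ^ j₀) := by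
          rw [hζ1, map_one, one_pow, mul_one]
      _ = ↑v * (π ζ) ^ (j + k * j₀) := by rw [map_pow, ← pow_mul, ← pow_add]
      _ = ↑v * ((π ζ) ^ j₀ * (π ζ) ^ (j + (k-1) * j₀)) := by rw [← pow_add, hkj]
      _ = ↑v * (π ζ) ^ j₀ * (π ζ) ^ (j + (k-1) * j₀) := by ring
  have hFeq : ∀ v w : (ZMod (p ^ n))ˣ, (∃ j : ℕ, w = v * zu ^ j) → F v = F w := by
    rintro v w ⟨j₀, rfl⟩
    refine le_antisymm (hFstep v j₀) ?_
    have hvw : v = (v * zu ^ j₀) * zu ^ ((k-1) * j₀) := by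
      rw [mul_assoc, ← pow_add]
      have hkj : j₀ + (k-1) * j₀ = j₀ * k := by
        have h1 : k - 1 + 1 = k := Nat.succ_pred_eq_of_pos hk
        calc j₀ + (k-1)*j₀ = ((k-1)+1) * j₀ := by ring
          _ = j₀ * k := by rw [h1, mul_comm]
      rw [hkj, pow_mul', hzuk, one_pow, mul_one]
    conv_rhs => rw [hvw]
    exact hFstep _ _
  have hFinj : ∀ v w : (ZMod (p ^ n))ˣ, F v = F w → ∃ j : ℕ, w = v * zu ^ j := by
    intro v w h
    obtain ⟨y₀, hy₀n, hy₀⟩ := hlift w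
    have hy₀w : y₀ ∈ F w := ⟨hy₀n, 0, by rw [hy₀, pow_zero, mul_one]⟩
    rw [← h] at hy₀w
    obtain ⟨-, j, hj⟩ := hy₀w
    refine ⟨j, ?_⟩
    ext
    rw [Units.val_mul, Units.val_pow_eq_pow_val, hzuv, ← hy₀, hj]
  -- the quotient
  have hQcard : Nat.card ((ZMod (p ^ n))ˣ ⧸ H) * k = (p - 1) * p ^ (n - 1) := by
    have hL := Subgroup.card_eq_card_quotient_mul_card_subgroup H
    rw [Nat.card_zpowers, horder] at hL
    have hcard : Nat.card (ZMod (p ^ n))ˣ = (p - 1) * p ^ (n - 1) := by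
      rw [Nat.card_eq_fintype_card, ZMod.card_units_eq_totient,
        Nat.totient_prime_pow hpp hn, mul_comm]
    rw [← hcard, hL]
  -- lift F to the quotient
  have hFconst : ∀ v w : (ZMod (p ^ n))ˣ, (QuotientGroup.mk v : (ZMod (p ^ n))ˣ ⧸ H)
      = QuotientGroup.mk w → F v = F w := by
    intro v w hvw
    rw [QuotientGroup.eq] at hvw
    obtain ⟨j, hj⟩ := (hmemH _).mp hvw
    refine hFeq v w ⟨j, ?_⟩
    have : v * (v⁻¹ * w) = v * zu ^ j := by rw [hj]
    rwa [← mul_assoc, mul_inv_cancel, one_mul] at this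
  set Ff : (ZMod (p ^ n))ˣ ⧸ H → Set ℤ_[p] :=
    Quotient.lift F (fun v w hvw => hFconst v w (Quotient.sound hvw)) with hFf
  have hFfinj : Function.Injective Ff := by
    intro q₁ q₂ hq
    induction q₁ using QuotientGroup.induction_on with | H v =>
    induction q₂ using QuotientGroup.induction_on with | H w =>
    obtain ⟨j, hj⟩ := hFinj v w hq
    rw [QuotientGroup.eq]
    rw [(hmemH _)]
    exact ⟨j, by rw [hj]; group⟩
  -- the set of orbits equals the range of Ff
  have hFfmk : ∀ v : (ZMod (p ^ n))ˣ, Ff (QuotientGroup.mk v) = F v := fun v => rfl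
  have hSrange : {s : Set ℤ_[p] | ∃ x : ℤ_[p], ‖x‖ = 1 ∧
      s = {y : ℤ_[p] | ∃ z ∈ {x : ℤ_[p] | ∃ (u : ℤ_[p]) (j : ℕ),
            x = (1 + (p : ℤ_[p]) ^ n * u) * ζ ^ j}, y = x * z}} = Set.range Ff := by
    ext s
    constructor
    · rintro ⟨x, hx, rfl⟩
      have hxu : IsUnit (π x) := (PadicInt.isUnit_iff.mpr hx).map π
      refine ⟨QuotientGroup.mk hxu.unit, ?_⟩
      rw [hFfmk, orb x hx]
      show {y : ℤ_[p] | ‖y‖ = 1 ∧ ∃ j : ℕ, π y = ↑hxu.unit * (π ζ) ^ j} = _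
      rw [IsUnit.unit_spec hxu]
    · rintro ⟨q, rfl⟩
      induction q using QuotientGroup.induction_on with | H v =>
      obtain ⟨x, hx, hπx⟩ := hlift v
      refine ⟨x, hx, ?_⟩
      rw [hFfmk, orb x hx]
      show {y : ℤ_[p] | ‖y‖ = 1 ∧ ∃ j : ℕ, π y = ↑v * (π ζ) ^ j} = _
      rw [hπx]
  rw [hSrange]
  have : Nat.card (Set.range Ff) = Nat.card ((ZMod (p ^ n))ˣ ⧸ H) :=
    (Nat.card_congr (Equiv.ofInjective Ff hFfinj)).symm
  rw [this, ← hQcard, Nat.mul_div_cancel _ hk]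

/-- let `p ≠ 2` be prime and `a ∈ ℤ_p^×` not a root of unity,
written `a = ζ a₁` with `ζ` a primitive `k`-th root of unity (`p ∤ k`) and
`a₁ ∈ 1 + pℤ_p`, and let `n = ord_p(a₁ - 1)`.  Then the closure of the powers
`{a^j : j ∈ ℕ}` in `ℤ_p` is `(1 + pⁿℤ_p) · ⟨ζ⟩`, and the number of distinct orbit
closures `x · closure{a^j}` of `L_a(x) = ax` on the unit circle `ℤ_p^×` is
`N(a) = (p-1) p^{n-1} / k`. -/
theorem stmt17 (p : ℕ) [Fact p.Prime] (hp2 : p ≠ 2)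
    (a ζ a₁ : ℤ_[p]) (ha : ‖a‖ = 1)
    (hnru : ∀ j : ℕ, 0 < j → a ^ j ≠ 1)
    (k : ℕ) (hζ : IsPrimitiveRoot ζ k) (hpk : ¬ p ∣ k)
    (hfact : a = ζ * a₁) (ha₁ : ‖a₁ - 1‖ < 1)
    (n : ℕ) (hn : 0 < n) (hval : ‖a₁ - 1‖ = (p : ℝ) ^ (-(n : ℤ))) :
    closure {x : ℤ_[p] | ∃ j : ℕ, x = a ^ j} =
      {x : ℤ_[p] | ∃ (u : ℤ_[p]) (j : ℕ), x = (1 + (p : ℤ_[p]) ^ n * u) * ζ ^ j} ∧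
    Nat.card {s : Set ℤ_[p] | ∃ x : ℤ_[p], ‖x‖ = 1 ∧
        s = {y : ℤ_[p] | ∃ z ∈ closure {w : ℤ_[p] | ∃ j : ℕ, w = a ^ j}, y = x * z}} =
      (p - 1) * p ^ (n - 1) / k := by
  have h1 := part1 p hp2 a ζ a₁ k hζ hpk hfact ha₁ n hn hval
  refine ⟨h1, ?_⟩
  rw [h1]
  exact part2 p hp2 ζ k hζ hpk n hn
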